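/- Let M be a monoid of hypersubstitutions of L, let Σ be a set of quasi-identities of L, and let QV be the quasivariety defined by Σ. If QV is M-solid, then a quasi-identity e is satisfied in every structure of QV if and only if e is M-hyper-satisfied in every structure of QV. -/

import Mathlib

open FirstOrder Language

universe u v w

/-- A hypersubstitution of `L` assigns to each `n`-ary function symbol of `L`
an `L`-term with variables in `Fin n`. -/
def Hypersub (L : FirstOrder.Language.{u, v}) : Type _ :=
  ∀ n : ℕ, L.Functions n → L.Term (Fin n)

variable {L : FirstOrder.Language.{u, v}}

/-- The extension `σ̂` of a hypersubstitution `σ` to all terms. -/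
def Hypersub.apply (σ : Hypersub L) {α : Type w} : L.Term α → L.Term α
  | Term.var x => Term.var x
  | Term.func f ts => Term.subst (σ _ f) (fun i => Hypersub.apply σ (ts i))

/-- The derived structure `A^σ`: same universe, each function symbol `f` is
interpreted by the term function of `σ f` in `A`. -/
def Hypersub.derive (σ : Hypersub L) {A : Type w} (S : L.Structure A) : L.Structure A :=
  letI := S
  { funMap := fun {n} f v => (σ n f).realize v
    RelMap := fun r v => Structure.RelMap r v }

/-- Realization of a term in an explicitly given structure. -/
def realizeIn {A : Type w} (S : L.Structure A) {α : Type*} (a : α → A) (t : L.Term α) : A :=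
  letI := S
  t.realize a

/-- A quasi-identity of `L` in `k` variables with `n` premises:
`(t₀ = s₀ ∧ ⋯ ∧ t_{n-1} = s_{n-1}) → (tₙ = sₙ)`. -/
structure QuasiIdentity (L : FirstOrder.Language.{u, v}) : Type max u (v + 1) where
  k : ℕ
  n : ℕ
  lhs : Fin n → L.Term (Fin k)
  rhs : Fin n → L.Term (Fin k)
  lhsC : L.Term (Fin k)
  rhsC : L.Term (Fin k)

/-- Satisfaction of a quasi-identity in a structure. -/
def QuasiIdentity.Satisfied (e : QuasiIdentity L) {A : Type w} (S : L.Structure A) : Prop :=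
  ∀ a : Fin e.k → A,
    (∀ i, realizeIn S a (e.lhs i) = realizeIn S a (e.rhs i)) →
      realizeIn S a e.lhsC = realizeIn S a e.rhsC

/-- The quasi-identity `σ(e)` obtained by applying `σ̂` to every term of `e`. -/
def QuasiIdentity.hmap (σ : Hypersub L) (e : QuasiIdentity L) : QuasiIdentity L :=
  ⟨e.k, e.n, fun i => σ.apply (e.lhs i), fun i => σ.apply (e.rhs i),
    σ.apply e.lhsC, σ.apply e.rhsC⟩

/-- A quasi-identity is `M`-hyper-satisfied if `σ(e)` is satisfied for every `σ ∈ M`. -/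
def QuasiIdentity.MHyperSatisfied (M : Set (Hypersub L)) (e : QuasiIdentity L)
    {A : Type w} (S : L.Structure A) : Prop :=
  ∀ σ ∈ M, (e.hmap σ).Satisfied S

/-- The identity hypersubstitution `σ_id`, with `σ_id f = f(x₀, …, x_{n-1})`. -/
def Hypersub.id (L : FirstOrder.Language.{u, v}) : Hypersub L :=
  fun _n f => Term.func f (fun i => Term.var i)

/-- Composition of hypersubstitutions: `(σ ∘ ρ) f = σ̂ (ρ f)`. -/
def Hypersub.comp (σ ρ : Hypersub L) : Hypersub L :=
  fun n f => σ.apply (ρ n f)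

/-- `M` is a monoid of hypersubstitutions: it contains the identity
hypersubstitution and is closed under composition. -/
def IsHypersubMonoid (M : Set (Hypersub L)) : Prop :=
  Hypersub.id L ∈ M ∧ ∀ σ ∈ M, ∀ ρ ∈ M, σ.comp ρ ∈ M

theorem realizeIn_apply {A : Type*} (S : L.Structure A) (σ : Hypersub L)
    {α : Type*} (a : α → A) (t : L.Term α) :
    realizeIn S a (σ.apply t) = realizeIn (σ.derive S) a t := by
  induction t with
  | var x => rfl
  | func f ts ih =>
    letI := S
    simp only [Hypersub.apply, realizeIn, Term.realize_subst, Term.realize]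
    show Term.realize _ (σ _ f) = _
    congr 1
    funext i
    exact ih i

theorem Hypersub.apply_id {α : Type*} (t : L.Term α) :
    (Hypersub.id L).apply t = t := by
  induction t with
  | var x => rfl
  | func f ts ih =>
    simp only [Hypersub.apply, Hypersub.id, Term.subst]
    congr 1
    funext i
    exact ih i

/-- If the quasivariety `QV` defined by `Γ` is `M`-solid, then a
quasi-identity `e` is satisfied in every structure of `QV` if and only if `e` is
`M`-hyper-satisfied in every structure of `QV`. -/
theorem M_solid_satisfied_iff_M_hyperSatisfied
    {L : FirstOrder.Language.{u, v}} [L.IsAlgebraic]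
    (M : Set (Hypersub L)) (hM : IsHypersubMonoid M) (Γ : Set (QuasiIdentity L))
    (hsolid : ∀ (A : Type w) (S : L.Structure A), (∀ e' ∈ Γ, e'.Satisfied S) →
        ∀ σ ∈ M, ∀ e' ∈ Γ, e'.Satisfied (Hypersub.derive σ S))
    (e : QuasiIdentity L) :
    (∀ (A : Type w) (S : L.Structure A), (∀ e' ∈ Γ, e'.Satisfied S) → e.Satisfied S) ↔
    (∀ (A : Type w) (S : L.Structure A), (∀ e' ∈ Γ, e'.Satisfied S) →
        e.MHyperSatisfied M S) := by
  constructor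
  · intro h A S hS σ hσ
    have hd := h A (Hypersub.derive σ S) (hsolid A S hS σ hσ)
    intro a hp
    simp only [QuasiIdentity.hmap, realizeIn_apply] at *
    exact (realizeIn_apply S σ a _).trans ((hd a (fun i => (realizeIn_apply S σ a _).symm.trans ((hp i).trans (realizeIn_apply S σ a _)))).trans (realizeIn_apply S σ a _).symm)
  · intro h A S hS
    have := h A S hS (Hypersub.id L) hM.1
    intro a hp
    have := this a
    simp only [QuasiIdentity.hmap, Hypersub.apply_id] at this
    exact this hp
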